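/- Let n ≥ 8, let P ∈ PLS(2,3;n), let S = {P(1,1), P(1,2), P(1,3)}, and let σ be the (1,2)-row-permutation of P. If P is not completely reduced, then the disjoint cycle decomposition of σ contains a cycle of length at least 3 that contains two consecutive elements neither of which belongs to S; that is, there is a symbol s lying in a cycle of σ of length at least 3 with s ∉ S and σ(s) ∉ S. -/

import Mathlib

/-- An `n × n` partial Latin square: each cell holds at most one symbol from `Fin n`,
and each symbol occurs at most once in every row and at most once in every column. -/
def IsPartialLatinSquare {n : ℕ} (P : Fin n → Fin n → Option (Fin n)) : Prop :=
  (∀ (i j j' : Fin n) (s : Fin n), P i j = some s → P i j' = some s → j = j') ∧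
  (∀ (i i' j : Fin n) (s : Fin n), P i j = some s → P i' j = some s → i = i')

/-- An `n × n` Latin square. -/
def IsLatinSquare {n : ℕ} (L : Fin n → Fin n → Fin n) : Prop :=
  (∀ i : Fin n, Function.Injective (L i)) ∧
  (∀ j : Fin n, Function.Injective fun i => L i j)

/-- `P` is completable if some Latin square agrees with `P` on all its nonempty cells. -/
def Completable {n : ℕ} (P : Fin n → Fin n → Option (Fin n)) : Prop :=
  ∃ L : Fin n → Fin n → Fin n, IsLatinSquare L ∧ ∀ i j s, P i j = some s → L i j = s

/-- The cycle type of the cycle of `σ` through `s`, relative to the symbol set `S`: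
the binary sequence recording, along the cycle starting at `s`, membership in `S`. -/
noncomputable def cycleTypeSeq {n : ℕ} (σ : Equiv.Perm (Fin n)) (S : Finset (Fin n)) (s : Fin n) :
    List Bool :=
  (List.range (Function.minimalPeriod (⇑σ) s)).map fun m => decide ((σ ^ m) s ∈ S)

/-- The allowed cycle types `00, 01, 11, 101, 111, 1010, 1110, 10101, 101010`. -/
def allowedTypes : List (List Bool) :=
  [[false, false], [false, true], [true, true],
   [true, false, true], [true, true, true],
   [true, false, true, false], [true, true, true, false],
   [true, false, true, false, true],
   [true, false, true, false, true, false]]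

/-- `σ` is completely reduced (relative to `S`) if the cycle type of every cycle of `σ`
is equivalent, up to cyclic rotation, to one of the allowed sequences. -/
def CompletelyReduced {n : ℕ} (σ : Equiv.Perm (Fin n)) (S : Finset (Fin n)) : Prop :=
  ∀ s : Fin n, ∃ m : ℕ, cycleTypeSeq σ S ((σ ^ m) s) ∈ allowedTypes


section Aux

theorem core_aux (w : List Bool) (h2 : 2 ≤ w.length) (h6 : w.length ≤ 6)
    (hT : ((Finset.range w.length).filter (fun k => w.getD k false = true)).card ≤ 3)
    (hnoc : 3 ≤ w.length → ∀ k, k < w.length →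
      (w.getD k false = true ∨ w.getD ((k+1) % w.length) false = true)) :
    ∃ m, m < w.length ∧ w.rotate m ∈ allowedTypes := by
  rcases w with _|⟨x0,_|⟨x1,_|⟨x2,_|⟨x3,_|⟨x4,_|⟨x5,_|⟨x6,w⟩⟩⟩⟩⟩⟩⟩ <;>
    simp only [List.length] at h2 h6 ⊢
  · omega
  · omega
  · revert hT hnoc; cases x0 <;> cases x1 <;> decide
  · revert hT hnoc; cases x0 <;> cases x1 <;> cases x2 <;> decide
  · revert hT hnoc; cases x0 <;> cases x1 <;> cases x2 <;> cases x3 <;> decide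
  · revert hT hnoc; cases x0 <;> cases x1 <;> cases x2 <;> cases x3 <;> cases x4 <;> decide
  · revert hT hnoc
    cases x0 <;> cases x1 <;> cases x2 <;> cases x3 <;> cases x4 <;> cases x5 <;> decide
  · omega

theorem modsucc_inj_aux {L k k' : ℕ} (hk : k < L) (hk' : k' < L)
    (h : (k+1) % L = (k'+1) % L) : k = k' := by
  have e1 : (k+1) % L = if k+1 = L then 0 else k+1 := by
    split
    · simp [*, Nat.mod_self]
    · exact Nat.mod_eq_of_lt (by omega)
  have e2 : (k'+1) % L = if k'+1 = L then 0 else k'+1 := by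
    split
    · simp [*, Nat.mod_self]
    · exact Nat.mod_eq_of_lt (by omega)
  rw [e1, e2] at h
  split at h <;> split at h <;> omega

theorem getD_cycleTypeSeq {n : ℕ} (σ : Equiv.Perm (Fin n)) (S : Finset (Fin n)) (s : Fin n)
    (k : ℕ) (hk : k < Function.minimalPeriod (⇑σ) s) :
    (cycleTypeSeq σ S s).getD k false = decide ((⇑σ)^[k] s ∈ S) := by
  have hlen : (cycleTypeSeq σ S s).length = Function.minimalPeriod (⇑σ) s := by
    simp [cycleTypeSeq]
  rw [List.getD_eq_getElem _ _ (by omega)]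
  simp only [cycleTypeSeq, List.getElem_map, List.getElem_range, Equiv.Perm.coe_pow]

theorem periodic_aux {n : ℕ} (σ : Equiv.Perm (Fin n)) (x : Fin n) :
    x ∈ Function.periodicPts ⇑σ := by
  refine ⟨orderOf σ, orderOf_pos σ, ?_⟩
  show (⇑σ)^[orderOf σ] x = x
  rw [← Equiv.Perm.coe_pow, pow_orderOf_eq_one]; rfl

theorem minper_iterate_aux {n : ℕ} (σ : Equiv.Perm (Fin n)) (x : Fin n) (k : ℕ) :
    Function.minimalPeriod (⇑σ) ((⇑σ)^[k] x) = Function.minimalPeriod (⇑σ) x := by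
  induction k with
  | zero => rfl
  | succ k ih =>
    rw [Function.iterate_succ_apply']
    rw [Function.minimalPeriod_apply (periodic_aux σ _)]
    exact ih

end Aux

/-- If `P ∈ PLS(2,3;n)`, `n ≥ 8`, is not completely reduced, then some cycle of its
`(1,2)`-row-permutation `σ` of length at least `3` contains two consecutive elements
neither of which belongs to `S = {P(1,1), P(1,2), P(1,3)}`. -/
theorem stmt_8 (n : ℕ) (hn : 8 ≤ n)
    (P : Fin n → Fin n → Option (Fin n))
    (hP : IsPartialLatinSquare P)
    (hfill : ∀ i j : Fin n, P i j ≠ none ↔ (i.val < 2 ∨ j.val < 3))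
    (a b c : Fin n)
    (ha : P ⟨0, by omega⟩ ⟨0, by omega⟩ = some a)
    (hb : P ⟨0, by omega⟩ ⟨1, by omega⟩ = some b)
    (hc : P ⟨0, by omega⟩ ⟨2, by omega⟩ = some c)
    (σ : Equiv.Perm (Fin n))
    (hσ : ∀ i x y : Fin n,
      P ⟨0, by omega⟩ i = some x → P ⟨1, by omega⟩ i = some y → σ x = y)
    (hnred : ¬ CompletelyReduced σ ({a, b, c} : Finset (Fin n))) :
    ∃ s : Fin n, 3 ≤ Function.minimalPeriod (⇑σ) s ∧
      s ∉ ({a, b, c} : Finset (Fin n)) ∧ σ s ∉ ({a, b, c} : Finset (Fin n)) := by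
  by_contra hcon
  push_neg at hcon
  apply hnred
  intro s
  have hrow0 : ∀ x : Fin n, ∃ i : Fin n, P ⟨0, by omega⟩ i = some x := by
    intro x
    have hne : ∀ j : Fin n, P ⟨0, by omega⟩ j ≠ none :=
      fun j => (hfill _ j).2 (Or.inl (by norm_num))
    choose f hf using fun j => Option.ne_none_iff_exists'.mp (hne j)
    have hinjf : Function.Injective f := by
      intro j j' h
      exact hP.1 _ j j' (f j) (hf j) (by rw [h]; exact hf j')
    obtain ⟨i, hi⟩ := Finite.surjective_of_injective hinjf x
    exact ⟨i, hi ▸ hf i⟩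
  have hnofix : ∀ x : Fin n, σ x ≠ x := by
    intro x hx
    obtain ⟨i, hi⟩ := hrow0 x
    have hne1 : P ⟨1, by omega⟩ i ≠ none := (hfill _ i).2 (Or.inl (by norm_num))
    obtain ⟨y, hy⟩ := Option.ne_none_iff_exists'.mp hne1
    have hxy := hσ i x y hi hy
    have hyx : y = x := by rw [← hxy, hx]
    subst hyx
    have h01 := hP.2 ⟨0, by omega⟩ ⟨1, by omega⟩ i y hi hy
    simp [Fin.ext_iff] at h01
  have hper2 : ∀ x : Fin n, 2 ≤ Function.minimalPeriod (⇑σ) x := by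
    intro x
    have h1 : 0 < Function.minimalPeriod (⇑σ) x :=
      Function.minimalPeriod_pos_of_mem_periodicPts (periodic_aux σ x)
    rcases Nat.lt_or_ge (Function.minimalPeriod (⇑σ) x) 2 with h | h
    · exfalso
      have hL1 : Function.minimalPeriod (⇑σ) x = 1 := by omega
      have hit := Function.iterate_minimalPeriod (f := ⇑σ) (x := x)
      rw [hL1] at hit
      simp only [Function.iterate_one] at hit
      exact hnofix x hit
    · exact h
  set L := Function.minimalPeriod (⇑σ) s with hL
  set w := cycleTypeSeq σ ({a, b, c} : Finset (Fin n)) s with hw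
  have hL2 : 2 ≤ L := hper2 s
  clear_value L w
  have hwlen : w.length = L := by rw [hw, hL]; simp [cycleTypeSeq]
  have hgetD : ∀ k, k < L →
      (w.getD k false = true ↔ (⇑σ)^[k] s ∈ ({a, b, c} : Finset (Fin n))) := by
    intro k hk
    rw [hw, getD_cycleTypeSeq σ _ s k (by rw [← hL]; exact hk)]
    simp
  have hinj : ∀ m m', m < L → m' < L → (⇑σ)^[m] s = (⇑σ)^[m'] s → m = m' := by
    have key : ∀ m m', m ≤ m' → m' < L → (⇑σ)^[m] s = (⇑σ)^[m'] s → m = m' := by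
      intro m m' hle hlt heq
      obtain ⟨d, rfl⟩ := Nat.exists_eq_add_of_le hle
      have heq2 : (⇑σ)^[m] ((⇑σ)^[d] s) = (⇑σ)^[m] s := by
        rw [← Function.iterate_add_apply, ← heq]
      have hd : (⇑σ)^[d] s = s := (Function.Injective.iterate σ.injective m) heq2
      have hdvd : L ∣ d := by rw [hL]; exact Function.IsPeriodicPt.minimalPeriod_dvd hd
      have : d = 0 := by
        rcases Nat.eq_zero_or_pos d with h0 | h0
        · exact h0
        · exact absurd (Nat.le_of_dvd h0 hdvd) (by omega)
      omega
    intro m m' hm hm' heq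
    rcases le_total m m' with h | h
    · exact key m m' h hm' heq
    · exact (key m' m h hm heq.symm).symm
  have hScard : ({a, b, c} : Finset (Fin n)).card ≤ 3 := by
    have h1 := Finset.card_insert_le a ({b, c} : Finset (Fin n))
    have h2 := Finset.card_insert_le b ({c} : Finset (Fin n))
    have h3 : ({c} : Finset (Fin n)).card = 1 := Finset.card_singleton c
    omega
  have hT : ((Finset.range w.length).filter (fun k => w.getD k false = true)).card ≤ 3 := by
    refine le_trans (Finset.card_le_card_of_injOn (fun k => (⇑σ)^[k] s) ?_ ?_) hScard
    · intro k hk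
      simp only [Finset.mem_coe, Finset.mem_filter, Finset.mem_range, hwlen] at hk
      exact (hgetD k hk.1).1 hk.2
    · intro k hk k' hk' heq
      simp only [Finset.coe_filter, Set.mem_setOf_eq, Finset.mem_range, hwlen] at hk hk'
      exact hinj k k' hk.1 hk'.1 heq
  have hnoc : 3 ≤ w.length → ∀ k, k < w.length →
      (w.getD k false = true ∨ w.getD ((k + 1) % w.length) false = true) := by
    rw [hwlen]
    intro h3 k hk
    by_cases hmem : (⇑σ)^[k] s ∈ ({a, b, c} : Finset (Fin n))
    · exact Or.inl ((hgetD k hk).2 hmem)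
    · right
      have hper : Function.minimalPeriod (⇑σ) ((⇑σ)^[k] s) = L := by
        rw [minper_iterate_aux σ s k]; exact hL.symm
      have hc := hcon ((⇑σ)^[k] s) (by rw [hper]; exact h3) hmem
      have hmodlt : (k + 1) % L < L := Nat.mod_lt _ (by omega)
      apply (hgetD _ hmodlt).2
      have hmodeq : (⇑σ)^[(k + 1) % L] s = (⇑σ)^[k + 1] s := by
        rw [hL]; exact Function.iterate_mod_minimalPeriod_eq
      rw [hmodeq, Function.iterate_succ_apply']
      exact hc
  have hL6 : L ≤ 6 := by
    by_contra h7
    push_neg at h7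
    have h3 : 3 ≤ w.length := by rw [hwlen]; omega
    have hsum : ((Finset.range w.length).filter (fun k => w.getD k false = true)).card +
        ((Finset.range w.length).filter (fun k => ¬ (w.getD k false = true))).card
        = w.length := by
      rw [Finset.card_filter_add_card_filter_not, Finset.card_range]
    have hFT : ((Finset.range w.length).filter (fun k => ¬ (w.getD k false = true))).card ≤
        ((Finset.range w.length).filter (fun k => w.getD k false = true)).card := by
      apply Finset.card_le_card_of_injOn (fun k => (k + 1) % w.length)
      · intro k hk
        simp only [Finset.mem_coe, Finset.mem_filter, Finset.mem_range] at hk ⊢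
        rcases hnoc h3 k hk.1 with h | h
        · exact absurd h hk.2
        · exact ⟨Nat.mod_lt _ (by omega), h⟩
      · intro k hk k' hk' heq
        simp only [Finset.coe_filter, Set.mem_setOf_eq, Finset.mem_range] at hk hk'
        exact modsucc_inj_aux (L := w.length) hk.1 hk'.1 heq
    have hT' := hT
    rw [hwlen] at hsum hFT hT'
    omega
  obtain ⟨m, hm, hmem⟩ := core_aux w (by omega) (by omega) hT hnoc
  refine ⟨m, ?_⟩
  have hrot : cycleTypeSeq σ ({a, b, c} : Finset (Fin n)) ((σ ^ m) s) = w.rotate m := by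
    have hlenL : (cycleTypeSeq σ ({a, b, c} : Finset (Fin n)) ((σ ^ m) s)).length = L := by
      simp only [cycleTypeSeq, List.length_map, List.length_range, Equiv.Perm.coe_pow]
      rw [minper_iterate_aux σ s m]; exact hL.symm
    apply List.ext_get
    · rw [hlenL, List.length_rotate, hwlen]
    · intro k h1 h2
      have hpt : (σ ^ k) ((σ ^ m) s) =
          (σ ^ ((k + m) % Function.minimalPeriod (⇑σ) s)) s := by
        simp only [Equiv.Perm.coe_pow]
        rw [← Function.iterate_add_apply]
        exact (Function.iterate_mod_minimalPeriod_eq).symm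
      rw [List.get_rotate]
      simp only [cycleTypeSeq, List.get_eq_getElem, List.getElem_map, List.getElem_range, hw,
        List.length_map, List.length_range, ← hL]
      rw [hpt, hL]
  rw [hrot]
  exact hmem
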